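/- Let T be a rooted tree with heavy path decomposition, and let P = (l,r) and Q = (s,t) be intersecting paths in T that share no light edge. Then all common vertices of P and Q lie in a single heavy path H, and moreover the lowest common ancestor of the endpoints of P or the lowest common ancestor of the endpoints of Q lies in V(P) ∩ V(Q) ∩ V(H). -/

import Mathlib

open Classical

/-- A rooted tree on `n` nodes, given by a parent function. -/
structure RTree (n : ℕ) where
  parent : Fin n → Fin n
  root : Fin n
  parent_root : parent root = root
  reaches_root : ∀ v, ∃ k, parent^[k] v = root

namespace RTree

variable {n : ℕ}

/-- `a` is an ancestor of `v` (possibly `a = v`). -/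
def isAncestor (T : RTree n) (a v : Fin n) : Prop := ∃ k, T.parent^[k] v = a

/-- The set of nodes in the subtree rooted at `a`. -/
noncomputable def subtree (T : RTree n) (a : Fin n) : Finset (Fin n) :=
  Finset.univ.filter fun v => T.isAncestor a v

/-- Distance from `v` to the root. -/
noncomputable def depth (T : RTree n) (v : Fin n) : ℕ := Nat.find (T.reaches_root v)

/-- `v` is a child of `u`. -/
def isChild (T : RTree n) (v u : Fin n) : Prop := v ≠ T.root ∧ T.parent v = u

/-- `heavy` assigns to each internal node a child of maximum subtree size (heavy child). -/
def IsHeavyChoice (T : RTree n) (heavy : Fin n → Fin n) : Prop :=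
  ∀ u : Fin n, (∃ c, T.isChild c u) →
    T.isChild (heavy u) u ∧
      ∀ c, T.isChild c u → (T.subtree c).card ≤ (T.subtree (heavy u)).card

/-- The edge from `v` to its parent is a light edge. -/
def isLightTop (T : RTree n) (heavy : Fin n → Fin n) (v : Fin n) : Prop :=
  v ≠ T.root ∧ heavy (T.parent v) ≠ v

/-- `{x, y}` is a light edge of `T`. -/
def isLightEdge (T : RTree n) (heavy : Fin n → Fin n) (x y : Fin n) : Prop :=
  (T.isChild x y ∧ heavy y ≠ x) ∨ (T.isChild y x ∧ heavy x ≠ y)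

lemma parent_fix_eq_root (T : RTree n) (a : Fin n) (h : T.parent a = a) : a = T.root := by
  obtain ⟨k, hk⟩ := T.reaches_root a
  have h2 : T.parent^[k] a = a := Function.iterate_fixed h k
  rw [h2] at hk; exact hk

/-- The graph on the nodes of `T` whose edges are exactly the heavy edges. -/
def heavyGraph (T : RTree n) (heavy : Fin n → Fin n) : SimpleGraph (Fin n) where
  Adj x y := (T.isChild x y ∧ heavy y = x) ∨ (T.isChild y x ∧ heavy x = y)
  symm := ⟨by intro x y h; tauto⟩
  loopless := ⟨by
    intro x h
    rcases h with ⟨⟨hne, hp⟩, _⟩ | ⟨⟨hne, hp⟩, _⟩ <;> exact hne (T.parent_fix_eq_root x hp)⟩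

/-- `a` and `b` lie on the same heavy path of the heavy path decomposition. -/
def sameHP (T : RTree n) (heavy : Fin n → Fin n) (a b : Fin n) : Prop :=
  (T.heavyGraph heavy).Reachable a b

lemma exists_common_ancestor (T : RTree n) (a b : Fin n) :
    ∃ m, T.isAncestor (T.parent^[m] a) b := by
  refine ⟨T.depth a, T.depth b, ?_⟩
  have h1 : T.parent^[T.depth b] b = T.root := Nat.find_spec (T.reaches_root b)
  have h2 : T.parent^[T.depth a] a = T.root := Nat.find_spec (T.reaches_root a)
  rw [h1, h2]

/-- The lowest common ancestor of `a` and `b`. -/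
noncomputable def lca (T : RTree n) (a b : Fin n) : Fin n :=
  T.parent^[Nat.find (T.exists_common_ancestor a b)] a

/-- The vertex set of the unique simple path between `a` and `b` in `T`. -/
def pathSet (T : RTree n) (a b : Fin n) : Set (Fin n) :=
  {w | (T.isAncestor w a ∨ T.isAncestor w b) ∧ T.isAncestor (T.lca a b) w}

lemma self_mem_subtree (T : RTree n) (a : Fin n) : a ∈ T.subtree a := by
  simp only [subtree, Finset.mem_filter, Finset.mem_univ, true_and]
  exact ⟨0, rfl⟩

/-- The largest pre-order label in the subtree rooted at `a`. -/
noncomputable def rmostLeaf (T : RTree n) (a : Fin n) : Fin n :=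
  (T.subtree a).max' ⟨a, T.self_mem_subtree a⟩

/-- The labels `1..n` of `T` form a pre-order (DFS) labelling. -/
def IsPreorder (T : RTree n) : Prop :=
  (∀ v, v ≠ T.root → T.parent v < v) ∧
    (∀ u v w : Fin n, u < v → v < w → T.isAncestor u w → T.isAncestor u v)

/-- Number of light edges on the path from the root to `v`
(the level of the heavy path of `v` in the heavy path tree). -/
noncomputable def lightDepth (T : RTree n) (heavy : Fin n → Fin n) (v : Fin n) : ℕ :=
  ((Finset.range (T.depth v)).filter fun k => T.isLightTop heavy (T.parent^[k] v)).card

end RTree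

namespace RTree

variable {n : ℕ}

lemma anc_trans (T : RTree n) {a b c : Fin n} (h1 : T.isAncestor a b)
    (h2 : T.isAncestor b c) : T.isAncestor a c := by
  obtain ⟨k, hk⟩ := h1
  obtain ⟨m, hm⟩ := h2
  exact ⟨k + m, by rw [Function.iterate_add_apply, hm, hk]⟩

lemma iterate_root (T : RTree n) (k : ℕ) : T.parent^[k] T.root = T.root :=
  Function.iterate_fixed T.parent_root k

lemma eq_root_of_cycle (T : RTree n) {u : Fin n} {c : ℕ} (hc : 0 < c)
    (h : T.parent^[c] u = u) : u = T.root := by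
  obtain ⟨d, hd⟩ := T.reaches_root u
  have hq : ∀ q, T.parent^[c * q] u = u := by
    intro q
    rw [Function.iterate_mul]
    exact Function.iterate_fixed h q
  have hcd : d ≤ c * d + c := by nlinarith
  have := hq (d + 1)
  rw [Nat.mul_add, Nat.mul_one] at this
  calc u = T.parent^[c * d + c] u := this.symm
    _ = T.parent^[c * d + c - d] (T.parent^[d] u) := by
        rw [← Function.iterate_add_apply]
        congr 1
        omega
    _ = T.root := by rw [hd, T.iterate_root]

lemma anc_antisymm (T : RTree n) {a b : Fin n} (h1 : T.isAncestor a b)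
    (h2 : T.isAncestor b a) : a = b := by
  obtain ⟨k, hk⟩ := h1
  obtain ⟨m, hm⟩ := h2
  rcases Nat.eq_zero_or_pos (m + k) with h0 | hpos
  · have : k = 0 := by omega
    simpa [this] using hk.symm
  · have hcyc : T.parent^[m + k] b = b := by
      rw [Function.iterate_add_apply, hk, hm]
    have hb : b = T.root := T.eq_root_of_cycle hpos hcyc
    have ha : a = T.root := by rw [← hk, hb, T.iterate_root]
    rw [ha, hb]

lemma anc_comparable (T : RTree n) {u v x : Fin n} (h1 : T.isAncestor u x)
    (h2 : T.isAncestor v x) : T.isAncestor u v ∨ T.isAncestor v u := by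
  obtain ⟨i, hi⟩ := h1
  obtain ⟨j, hj⟩ := h2
  rcases le_total i j with h | h
  · right
    refine ⟨j - i, ?_⟩
    rw [← hi, ← Function.iterate_add_apply]
    rw [← hj]
    congr 1
    omega
  · left
    refine ⟨i - j, ?_⟩
    rw [← hj, ← Function.iterate_add_apply]
    rw [← hi]
    congr 1
    omega

lemma lca_anc_left (T : RTree n) (a b : Fin n) : T.isAncestor (T.lca a b) a :=
  ⟨Nat.find (T.exists_common_ancestor a b), rfl⟩

lemma lca_anc_right (T : RTree n) (a b : Fin n) : T.isAncestor (T.lca a b) b :=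
  Nat.find_spec (T.exists_common_ancestor a b)

lemma lca_mem_pathSet (T : RTree n) (a b : Fin n) : T.lca a b ∈ T.pathSet a b :=
  ⟨Or.inl (T.lca_anc_left a b), ⟨0, rfl⟩⟩

lemma mem_pathSet_of_between (T : RTree n) {a b w z : Fin n} (hw : w ∈ T.pathSet a b)
    (hzw : T.isAncestor z w) (hlz : T.isAncestor (T.lca a b) z) : z ∈ T.pathSet a b := by
  refine ⟨?_, hlz⟩
  rcases hw.1 with h | h
  · exact Or.inl (T.anc_trans hzw h)
  · exact Or.inr (T.anc_trans hzw h)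

/-- Key lemma: if `lca s t` is an ancestor of `lca l r`, then `lca l r` works as the
heavy path representative. -/
lemma key (T : RTree n) (heavy : Fin n → Fin n) (l r s t : Fin n)
    (x : Fin n) (hx : x ∈ T.pathSet l r ∩ T.pathSet s t)
    (hnolight : ¬ ∃ x : Fin n, x ∈ T.pathSet l r ∧ x ≠ T.lca l r ∧
        x ∈ T.pathSet s t ∧ x ≠ T.lca s t ∧ T.isLightTop heavy x)
    (hvu : T.isAncestor (T.lca s t) (T.lca l r)) :
    (T.pathSet l r ∩ T.pathSet s t) ⊆ {w | T.sameHP heavy (T.lca l r) w} ∧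
    T.lca l r ∈ T.pathSet l r ∩ T.pathSet s t ∩ {w | T.sameHP heavy (T.lca l r) w} := by
  set u := T.lca l r with hu
  set v := T.lca s t with hv
  -- u is in Q
  have huQ : u ∈ T.pathSet s t := by
    refine ⟨?_, hvu⟩
    have hux : T.isAncestor u x := hx.1.2
    rcases hx.2.1 with h | h
    · exact Or.inl (T.anc_trans hux h)
    · exact Or.inr (T.anc_trans hux h)
  -- main subset claim
  have hsub : (T.pathSet l r ∩ T.pathSet s t) ⊆ {w | T.sameHP heavy u w} := by
    intro w hw
    have huw : T.isAncestor u w := hw.1.2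
    have hex : ∃ m, T.parent^[m] w = u := huw
    set m0 := Nat.find hex with hm0
    have hm0spec : T.parent^[m0] w = u := Nat.find_spec hex
    -- the chain from w to u consists of heavy edges
    have main : ∀ j, j ≤ m0 → (T.heavyGraph heavy).Reachable u (T.parent^[m0 - j] w) := by
      intro j
      induction j with
      | zero =>
        intro _
        simp only [Nat.sub_zero, hm0spec]
        exact SimpleGraph.Reachable.refl u
      | succ j ih =>
        intro hj
        have hj' : j ≤ m0 := by omega
        set k := m0 - (j + 1) with hk
        have hk1 : m0 - j = k + 1 := by omega
        have hkm : k < m0 := by omega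
        set z := T.parent^[k] w with hz
        have hz' : T.parent^[k + 1] w = T.parent z := by
          rw [hz, Function.iterate_succ_apply']
        have hreach' : (T.heavyGraph heavy).Reachable u (T.parent z) := by
          have := ih hj'
          rwa [hk1, hz'] at this
        -- facts about z
        have hancuz : T.isAncestor u z := by
          refine ⟨m0 - k, ?_⟩
          rw [hz, ← Function.iterate_add_apply]
          rw [← hm0spec]
          congr 1
          omega
        have hancz_w : T.isAncestor z w := ⟨k, rfl⟩
        have hzne_u : z ≠ u := fun h => Nat.find_min hex hkm (by rw [← hz, h])
        have hzroot : z ≠ T.root := by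
          intro h
          have : u = T.root := by
            obtain ⟨c, hc⟩ := hancuz
            rw [← hc, h, T.iterate_root]
          exact hzne_u (by rw [h, this])
        have hzne_v : z ≠ v := by
          intro h
          have : u = v := T.anc_antisymm (h ▸ hancuz) hvu
          exact hzne_u (by rw [h, ← this])
        have hzP : z ∈ T.pathSet l r := T.mem_pathSet_of_between hw.1 hancz_w hancuz
        have hzQ : z ∈ T.pathSet s t :=
          T.mem_pathSet_of_between hw.2 hancz_w (T.anc_trans hvu hancuz)
        have hheavy : heavy (T.parent z) = z := by
          by_contra hne
          exact hnolight ⟨z, hzP, hzne_u, hzQ, hzne_v, hzroot, hne⟩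
        have hadj : (T.heavyGraph heavy).Adj z (T.parent z) :=
          Or.inl ⟨⟨hzroot, rfl⟩, hheavy⟩
        exact hreach'.trans hadj.symm.reachable
    have := main m0 le_rfl
    simpa [sameHP] using this
  refine ⟨hsub, ⟨T.lca_mem_pathSet l r, huQ⟩, ?_⟩
  exact hsub ⟨T.lca_mem_pathSet l r, huQ⟩

end RTree


/-- let `P` (between `l, r`) and `Q` (between `s, t`) be intersecting paths that
share no light edge (an edge of a path joins a non-top vertex `x` of the path to its parent).
Then all common vertices lie in a single heavy path `H`, and `lca l r` or `lca s t` lies in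
`V(P) ∩ V(Q) ∩ V(H)`. -/
theorem stmt15 {n : ℕ} (T : RTree n) (heavy : Fin n → Fin n) (hh : T.IsHeavyChoice heavy)
    (l r s t : Fin n)
    (hint : (T.pathSet l r ∩ T.pathSet s t).Nonempty)
    (hnolight : ¬ ∃ x : Fin n, x ∈ T.pathSet l r ∧ x ≠ T.lca l r ∧
        x ∈ T.pathSet s t ∧ x ≠ T.lca s t ∧ T.isLightTop heavy x) :
    ∃ h : Fin n,
      (T.pathSet l r ∩ T.pathSet s t) ⊆ {w | T.sameHP heavy h w} ∧
      (T.lca l r ∈ T.pathSet l r ∩ T.pathSet s t ∩ {w | T.sameHP heavy h w} ∨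
        T.lca s t ∈ T.pathSet l r ∩ T.pathSet s t ∩ {w | T.sameHP heavy h w}) := by
  obtain ⟨x, hx⟩ := hint
  have hux : T.isAncestor (T.lca l r) x := hx.1.2
  have hvx : T.isAncestor (T.lca s t) x := hx.2.2
  rcases T.anc_comparable hux hvx with h | h
  · -- lca l r is an ancestor of lca s t : use lca s t (swap roles)
    have hnolight' : ¬ ∃ y : Fin n, y ∈ T.pathSet s t ∧ y ≠ T.lca s t ∧
        y ∈ T.pathSet l r ∧ y ≠ T.lca l r ∧ T.isLightTop heavy y := by
      intro ⟨y, h1, h2, h3, h4, h5⟩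
      exact hnolight ⟨y, h3, h4, h1, h2, h5⟩
    obtain ⟨hsub, hmem⟩ := T.key heavy s t l r x ⟨hx.2, hx.1⟩ hnolight' h
    refine ⟨T.lca s t, ?_, Or.inr ?_⟩
    · intro w hw
      exact hsub ⟨hw.2, hw.1⟩
    · exact ⟨⟨hmem.1.2, hmem.1.1⟩, hmem.2⟩
  · -- lca s t is an ancestor of lca l r : use lca l r
    obtain ⟨hsub, hmem⟩ := T.key heavy l r s t x hx hnolight h
    exact ⟨T.lca l r, hsub, Or.inl hmem⟩
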